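/- Let m and d be positive integers with d > 4^m, and let S_d(2) ⊂ ℝ^d be the set of the d standard basis vectors of ℝ^d (a regular (d−1)-dimensional simplex of sidelength √2). Consider the Cartesian power S_d(2)^m ⊂ ℝ^{dm}, i.e., the set of tuples (x₁, …, x_m) where each x_j is a standard basis vector of ℝ^d. Then for every coloring of S_d(2)^m with an arbitrary set of colors, there exist either two distinct points of S_d(2)^m at Euclidean distance √2 with the same color, or a rainbow isometric copy of {0, √2}^m (the vertex set of an m-dimensional hypercube of sidelength √2) inside S_d(2)^m. -/

import Mathlib

/-- The vertex set `{0, s}^m ⊂ ℝ^m` of an `m`-dimensional hypercube of sidelength `s`. -/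
def cubeVertices (m : ℕ) (s : ℝ) : Set (EuclideanSpace ℝ (Fin m)) :=
  {x | ∀ i, x i = 0 ∨ x i = s}

/-- The Cartesian power `S_d(2)^m ⊂ ℝ^{dm}`: tuples of `m` standard basis vectors of
`ℝ^d`, viewed inside the Euclidean space with index set `Fin m × Fin d`. -/
def simplexPower (d m : ℕ) : Set (EuclideanSpace ℝ (Fin m × Fin d)) :=
  {x | ∀ j : Fin m, ∃ i : Fin d, ∀ i' : Fin d,
    x (j, i') = if i' = i then 1 else 0}

namespace SPAux

lemma pow_aux (n k : ℕ) : (n - k) * (n + 1) ^ k ≤ n ^ (k + 1) := by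
  induction k with
  | zero => simpa using Nat.sub_le n 0
  | succ k ih =>
      rcases Nat.le_total n (k + 1) with h | h
      · have h0 : n - (k + 1) = 0 := by omega
        simp [h0]
      · have ha : n - (k + 1) ≤ n := Nat.sub_le _ _
        have h1 : (n - (k + 1)) * (n + 1) ≤ (n - k) * n := by
          have e2 : n - k = (n - (k + 1)) + 1 := by omega
          rw [e2]
          nlinarith [ha]
        calc (n - (k + 1)) * (n + 1) ^ (k + 1)
            = ((n - (k + 1)) * (n + 1)) * (n + 1) ^ k := by ring
          _ ≤ ((n - k) * n) * (n + 1) ^ k := Nat.mul_le_mul_right _ h1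
          _ = n * ((n - k) * (n + 1) ^ k) := by ring
          _ ≤ n * n ^ (k + 1) := Nat.mul_le_mul_left _ ih
          _ = n ^ (k + 1 + 1) := by ring

lemma count_ineq (m d : ℕ) (hm : 0 < m) (hd : 4 ^ m < d) :
    (2 ^ m * 2 ^ m - 2 ^ m) * (d ^ m * d ^ (m - 1)) < 2 * (d * d - d) ^ m := by
  set A := 2 ^ m with hA
  have hA2 : 2 ≤ A := by
    calc 2 = 2 ^ 1 := rfl
      _ ≤ 2 ^ m := Nat.pow_le_pow_right (by norm_num) hm
  have hmA : m < A := Nat.lt_two_pow_self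
  have h4 : (4 : ℕ) ^ m = A * A := by
    rw [hA, ← Nat.mul_pow]
  have hB : A * A < d := by rw [← h4]; exact hd
  -- key: A * A ≤ 2 * (d - m)
  have h2A : 2 * A ≤ A * A := Nat.mul_le_mul_right A hA2
  have k1 : A * A ≤ 2 * (d - m) := by omega
  -- pow_aux with n = d - 1, k = m - 1
  have k2 : (d - m) * d ^ (m - 1) ≤ (d - 1) ^ m := by
    have := pow_aux (d - 1) (m - 1)
    have e1 : d - 1 - (m - 1) = d - m := by omega
    have e2 : d - 1 + 1 = d := by omega
    have e3 : m - 1 + 1 = m := by omega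
    rwa [e1, e2, e3] at this
  have hdd : d * d - d = d * (d - 1) := by
    rw [Nat.mul_sub, Nat.mul_one]
  rw [hdd, Nat.mul_pow]
  have hC1 : 1 ≤ d ^ (m - 1) := Nat.one_le_pow _ _ (by omega)
  have hD1 : 0 < d ^ m := Nat.pow_pos (by omega)
  have main : (A * A - A) * d ^ (m - 1) < 2 * (d - 1) ^ m := by
    have h1 : (A * A - A + 1) * d ^ (m - 1) ≤ (A * A) * d ^ (m - 1) :=
      Nat.mul_le_mul_right _ (by omega)
    have h2 : A * A * d ^ (m - 1) ≤ (2 * (d - m)) * d ^ (m - 1) :=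
      Nat.mul_le_mul_right _ k1
    calc (A * A - A) * d ^ (m - 1) < (A * A - A) * d ^ (m - 1) + d ^ (m - 1) := by omega
      _ = (A * A - A + 1) * d ^ (m - 1) := by ring
      _ ≤ A * A * d ^ (m - 1) := h1
      _ ≤ (2 * (d - m)) * d ^ (m - 1) := h2
      _ = 2 * ((d - m) * d ^ (m - 1)) := by ring
      _ ≤ 2 * (d - 1) ^ m := by omega
  calc (A * A - A) * (d ^ m * d ^ (m - 1)) = d ^ m * ((A * A - A) * d ^ (m - 1)) := by ring
    _ < d ^ m * (2 * (d - 1) ^ m) := (Nat.mul_lt_mul_left hD1).mpr main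
    _ = 2 * (d ^ m * (d - 1) ^ m) := by ring


lemma exists_rainbow (m d : ℕ) (hm : 0 < m) (hd : 4 ^ m < d) {α : Type*}
    (c : (Fin m → Fin d) → α)
    (hp : ∀ u v : Fin m → Fin d,
      (∃ j₀, u j₀ ≠ v j₀ ∧ ∀ j, j ≠ j₀ → u j = v j) → c u ≠ c v) :
    ∃ F : Fin m → Fin d × Fin d, (∀ j, (F j).1 ≠ (F j).2) ∧
      ∀ ε δ : Fin m → Bool,
        c (fun j => if ε j then (F j).2 else (F j).1) =
          c (fun j => if δ j then (F j).2 else (F j).1) → ε = δ := by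
  classical
  have hd0 : 0 < d := lt_of_le_of_lt (Nat.zero_le _) hd
  set z0 : Fin d := ⟨0, hd0⟩ with hz0
  set g : (Fin m → Fin d × Fin d) → (Fin m → Bool) → (Fin m → Fin d) :=
    fun F ε j => if ε j then (F j).2 else (F j).1 with hg
  set P : Finset (Fin m → Fin d × Fin d) :=
    Fintype.piFinset (fun _ : Fin m => (Finset.univ : Finset (Fin d)).offDiag) with hP
  have hPcard : P.card = (d * d - d) ^ m := by
    rw [hP, Fintype.card_piFinset]
    simp [Finset.offDiag_card]
  set Bd : (Fin m → Bool) × (Fin m → Bool) → Finset (Fin m → Fin d × Fin d) :=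
    fun q => P.filter (fun F => c (g F q.1) = c (g F q.2)) with hBd
  -- key injection bound
  have key : ∀ q : (Fin m → Bool) × (Fin m → Bool), q.1 ≠ q.2 →
      (Bd q).card ≤ d ^ m * d ^ (m - 1) := by
    rintro ⟨ε, δ⟩ hq
    obtain ⟨j₀, hj₀⟩ := Function.ne_iff.mp hq
    set T : Finset ((Fin m → Fin d) × (Fin m → Fin d)) :=
      Finset.univ ×ˢ (Finset.univ.filter fun w : Fin m → Fin d => w j₀ = z0) with hT
    have hTcard : T.card = d ^ m * d ^ (m - 1) := by
      rw [hT, Finset.card_product]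
      congr 1
      · simp
      · have he : (Finset.univ.filter fun w : Fin m → Fin d => w j₀ = z0)
            = Fintype.piFinset (fun j => if j = j₀ then ({z0} : Finset (Fin d)) else Finset.univ) := by
          ext w
          simp only [Finset.mem_filter, Finset.mem_univ, true_and, Fintype.mem_piFinset]
          constructor
          · intro h j
            by_cases hj : j = j₀ <;> simp [hj, h]
          · intro h
            have := h j₀
            simpa using this
        rw [he, Fintype.card_piFinset]
        have : ∀ j : Fin m, ((if j = j₀ then ({z0} : Finset (Fin d)) else Finset.univ)).card
            = if j = j₀ then 1 else d := by
          intro j; by_cases hj : j = j₀ <;> simp [hj]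
        rw [Finset.prod_congr rfl (fun j _ => this j)]
        rw [← Finset.prod_erase_mul _ _ (Finset.mem_univ j₀)]
        simp only [if_pos rfl, mul_one]
        rw [Finset.prod_congr rfl (fun j hj => if_neg (Finset.ne_of_mem_erase hj)),
          Finset.prod_const, Finset.card_erase_of_mem (Finset.mem_univ j₀)]
        simp
    set Φ : (Fin m → Fin d × Fin d) → (Fin m → Fin d) × (Fin m → Fin d) :=
      fun F => (g F ε, fun j => if ε j = δ j then (if ε j then (F j).1 else (F j).2)
        else if j = j₀ then z0 else g F δ j) with hΦ
    rw [← hTcard]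
    apply Finset.card_le_card_of_injOn Φ
    · intro F hF
      rw [hT]
      refine Finset.mem_product.mpr ⟨Finset.mem_univ _, Finset.mem_filter.mpr ⟨Finset.mem_univ _, ?_⟩⟩
      simp [hΦ, hj₀]
    · intro F hF G hG h
      have hFP : F ∈ P ∧ c (g F ε) = c (g F δ) := by
        simpa [hBd] using hF
      have hGP : G ∈ P ∧ c (g G ε) = c (g G δ) := by
        simpa [hBd] using hG
      have h1 : g F ε = g G ε := congrArg Prod.fst h
      have h2 : (fun j => if ε j = δ j then (if ε j then (F j).1 else (F j).2)
          else if j = j₀ then z0 else g F δ j)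
          = (fun j => if ε j = δ j then (if ε j then (G j).1 else (G j).2)
          else if j = j₀ then z0 else g G δ j) := congrArg Prod.snd h
      have hagree : ∀ j, j ≠ j₀ → g F δ j = g G δ j := by
        intro j hj
        by_cases he : ε j = δ j
        · have : g F ε j = g G ε j := congrFun h1 j
          simpa [hg, ← he] using this
        · have := congrFun h2 j
          simpa [he, hj] using this
      have hcv : c (g F δ) = c (g G δ) := by
        rw [← hFP.2, ← hGP.2, h1]
      have hv : g F δ = g G δ := by
        by_contra hne
        refine hp (g F δ) (g G δ) ⟨j₀, ?_, hagree⟩ hcv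
        intro h0
        apply hne
        funext j
        by_cases hj : j = j₀
        · rw [hj]; exact h0
        · exact hagree j hj
      funext j
      have e1 : g F ε j = g G ε j := congrFun h1 j
      have e2 : g F δ j = g G δ j := congrFun hv j
      have e3 := congrFun h2 j
      refine Prod.ext ?_ ?_ <;>
        · rcases Bool.eq_false_or_eq_true (ε j) with hb | hb <;>
            rcases Bool.eq_false_or_eq_true (δ j) with hb' | hb' <;>
            simp [hg, hb, hb'] at e1 e2 e3 ⊢ <;> tauto
  -- global bad set
  set BadAll : Finset (Fin m → Fin d × Fin d) :=
    P.filter (fun F => ∃ ε δ : Fin m → Bool, ε ≠ δ ∧ c (g F ε) = c (g F δ)) with hBadAll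
  set Q : Finset ((Fin m → Bool) × (Fin m → Bool)) :=
    (Finset.univ : Finset (Fin m → Bool)).offDiag with hQ
  have hQcard : Q.card = 2 ^ m * 2 ^ m - 2 ^ m := by
    rw [hQ, Finset.offDiag_card]
    simp
  have hsum : 2 * BadAll.card ≤ ∑ q ∈ Q, (Bd q).card := by
    have h1 : ∀ q ∈ Q, (Bd q).card = ∑ F ∈ P, (if c (g F q.1) = c (g F q.2) then 1 else 0) := by
      intro q _
      rw [hBd, Finset.card_filter]
    rw [Finset.sum_congr rfl h1, Finset.sum_comm]
    have h2 : ∀ F ∈ BadAll, 2 ≤ ∑ q ∈ Q, (if c (g F q.1) = c (g F q.2) then 1 else 0) := by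
      intro F hF
      obtain ⟨hFP, ε, δ, hne, hc⟩ := by
        simpa [hBadAll] using hF
      rw [← Finset.card_filter]
      have hsub : ({(ε, δ), (δ, ε)} : Finset _) ⊆ Q.filter (fun q => c (g F q.1) = c (g F q.2)) := by
        intro q hq
        rcases Finset.mem_insert.mp hq with h | h
        · subst h
          exact Finset.mem_filter.mpr ⟨Finset.mem_offDiag.mpr ⟨Finset.mem_univ _, Finset.mem_univ _, hne⟩, hc⟩
        · rw [Finset.mem_singleton.mp h]
          exact Finset.mem_filter.mpr ⟨Finset.mem_offDiag.mpr ⟨Finset.mem_univ _, Finset.mem_univ _, Ne.symm hne⟩, hc.symm⟩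
      have hcard2 : ({(ε, δ), (δ, ε)} : Finset _).card = 2 := by
        rw [Finset.card_insert_of_notMem, Finset.card_singleton]
        simp only [Finset.mem_singleton]
        intro h
        exact hne (congrArg Prod.fst h)
      calc 2 = ({(ε, δ), (δ, ε)} : Finset _).card := hcard2.symm
        _ ≤ _ := Finset.card_le_card hsub
    calc 2 * BadAll.card = ∑ _F ∈ BadAll, 2 := by
          rw [Finset.sum_const, smul_eq_mul, mul_comm]
      _ ≤ ∑ F ∈ BadAll, ∑ q ∈ Q, (if c (g F q.1) = c (g F q.2) then 1 else 0) :=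
          Finset.sum_le_sum h2
      _ ≤ ∑ F ∈ P, ∑ q ∈ Q, (if c (g F q.1) = c (g F q.2) then 1 else 0) :=
          Finset.sum_le_sum_of_subset (Finset.filter_subset _ _)
  have hQsum : ∑ q ∈ Q, (Bd q).card ≤ Q.card * (d ^ m * d ^ (m - 1)) := by
    rw [← smul_eq_mul]
    apply Finset.sum_le_card_nsmul
    intro q hq
    exact key q (Finset.mem_offDiag.mp hq).2.2
  have hlt : BadAll.card < P.card := by
    have hci := count_ineq m d hm hd
    have h2 : 2 * BadAll.card < 2 * P.card := by
      rw [hPcard]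
      calc 2 * BadAll.card ≤ ∑ q ∈ Q, (Bd q).card := hsum
        _ ≤ Q.card * (d ^ m * d ^ (m - 1)) := hQsum
        _ = (2 ^ m * 2 ^ m - 2 ^ m) * (d ^ m * d ^ (m - 1)) := by rw [hQcard]
        _ < 2 * (d * d - d) ^ m := hci
    exact Nat.lt_of_mul_lt_mul_left h2
  obtain ⟨F, hFP, hFB⟩ : ∃ F ∈ P, F ∉ BadAll := by
    by_contra hcon
    push_neg at hcon
    exact absurd (Finset.card_le_card fun F hF => hcon F hF) (not_le.mpr hlt)
  refine ⟨F, ?_, ?_⟩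
  · intro j
    have hj := Fintype.mem_piFinset.mp hFP j
    exact (Finset.mem_offDiag.mp hj).2.2
  · intro ε δ hc
    by_contra hne
    exact hFB (Finset.mem_filter.mpr ⟨hFP, ε, δ, hne, hc⟩)


variable {m d : ℕ}

/-- The embedding of tuples into the simplex power. -/
def kappa (m d : ℕ) (v : Fin m → Fin d) : EuclideanSpace ℝ (Fin m × Fin d) :=
  WithLp.toLp 2 (fun p : Fin m × Fin d => if p.2 = v p.1 then 1 else 0)

lemma kappa_mem (v : Fin m → Fin d) : kappa m d v ∈ simplexPower d m :=
  fun j => ⟨v j, fun _ => rfl⟩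

lemma kappa_inj : Function.Injective (kappa m d) := by
  intro u v h
  funext j
  have := congrFun (congrArg WithLp.ofLp h) (j, u j)
  by_contra hne
  simp [kappa, hne] at this

lemma dist_kappa (u v : Fin m → Fin d) :
    dist (kappa m d u) (kappa m d v) =
      Real.sqrt (2 * (Finset.univ.filter fun j => u j ≠ v j).card) := by
  rw [EuclideanSpace.dist_eq]
  congr 1
  rw [Fintype.sum_prod_type]
  have hrow : ∀ j : Fin m,
      (∑ i : Fin d, dist (kappa m d u (j, i)) (kappa m d v (j, i)) ^ 2)
        = if u j = v j then 0 else 2 := by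
    intro j
    by_cases h : u j = v j
    · simp [kappa, h]
    · rw [if_neg h]
      have hterm : ∀ i : Fin d,
          dist (kappa m d u (j, i)) (kappa m d v (j, i)) ^ 2
            = (if i = u j then (1:ℝ) else 0) + (if i = v j then 1 else 0) := by
        intro i
        simp only [kappa]
        by_cases h1 : i = u j <;> by_cases h2 : i = v j <;>
          simp [h1, h2, Real.dist_eq] <;> simp_all
      rw [Finset.sum_congr rfl fun i _ => hterm i, Finset.sum_add_distrib]
      simp
      norm_num
  rw [Finset.sum_congr rfl fun j _ => hrow j]
  have : (2 : ℝ) * (Finset.univ.filter fun j => u j ≠ v j).card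
      = ∑ j ∈ Finset.univ.filter (fun j => u j ≠ v j), (2 : ℝ) := by
    rw [Finset.sum_const, nsmul_eq_mul, mul_comm]
  rw [this, Finset.sum_filter]
  refine Finset.sum_congr rfl fun j _ => ?_
  by_cases h : u j = v j <;> simp [h]

lemma dist_cube (x y : EuclideanSpace ℝ (Fin m))
    (hx : x ∈ cubeVertices m (Real.sqrt 2)) (hy : y ∈ cubeVertices m (Real.sqrt 2)) :
    dist x y = Real.sqrt (2 * (Finset.univ.filter fun j => x j ≠ y j).card) := by
  rw [EuclideanSpace.dist_eq]
  congr 1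
  have hterm : ∀ j : Fin m, dist (x j) (y j) ^ 2 = if x j = y j then (0:ℝ) else 2 := by
    intro j
    by_cases h : x j = y j
    · simp [h]
    · rw [if_neg h]
      have h22 : Real.sqrt 2 ^ 2 = 2 := Real.sq_sqrt (by norm_num)
      rcases hx j with h1 | h1 <;> rcases hy j with h2 | h2
      · exact absurd (h1.trans h2.symm) h
      · rw [Real.dist_eq, h1, h2, sq_abs]; nlinarith [h22]
      · rw [Real.dist_eq, h1, h2, sq_abs]; nlinarith [h22]
      · exact absurd (h1.trans h2.symm) h
  rw [Finset.sum_congr rfl fun j _ => hterm j]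
  have : (2 : ℝ) * (Finset.univ.filter fun j => x j ≠ y j).card
      = ∑ j ∈ Finset.univ.filter (fun j => x j ≠ y j), (2 : ℝ) := by
    rw [Finset.sum_const, nsmul_eq_mul, mul_comm]
  rw [this, Finset.sum_filter]
  refine Finset.sum_congr rfl fun j _ => ?_
  by_cases h : x j = y j <;> simp [h]



end SPAux

/-- If `d > 4^m`, then every coloring of `S_d(2)^m` with an arbitrary set of colors
contains either two distinct same-colored points at Euclidean distance `√2`, or a
rainbow isometric copy of the vertex set `{0, √2}^m` inside `S_d(2)^m`. -/
theorem simplex_power_edge_or_rainbow_cube (m d : ℕ) (hm : 0 < m) (hd : 4 ^ m < d)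
    {α : Type*} (χ : EuclideanSpace ℝ (Fin m × Fin d) → α) :
    (∃ x ∈ simplexPower d m, ∃ y ∈ simplexPower d m,
      x ≠ y ∧ dist x y = Real.sqrt 2 ∧ χ x = χ y) ∨
    (∃ f : EuclideanSpace ℝ (Fin m) → EuclideanSpace ℝ (Fin m × Fin d),
      Set.InjOn f (cubeVertices m (Real.sqrt 2)) ∧
      (∀ x ∈ cubeVertices m (Real.sqrt 2), f x ∈ simplexPower d m) ∧
      (∀ x ∈ cubeVertices m (Real.sqrt 2), ∀ y ∈ cubeVertices m (Real.sqrt 2),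
        dist (f x) (f y) = dist x y) ∧
      (∀ x ∈ cubeVertices m (Real.sqrt 2), ∀ y ∈ cubeVertices m (Real.sqrt 2),
        χ (f x) = χ (f y) → x = y)) := by
  classical
  by_cases H : ∃ u v : Fin m → Fin d, u ≠ v ∧
      dist (SPAux.kappa m d u) (SPAux.kappa m d v) = Real.sqrt 2 ∧
      χ (SPAux.kappa m d u) = χ (SPAux.kappa m d v)
  · obtain ⟨u, v, huv, hdist, hcol⟩ := H
    exact Or.inl ⟨_, SPAux.kappa_mem u, _, SPAux.kappa_mem v,
      fun h => huv (SPAux.kappa_inj h), hdist, hcol⟩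
  · right
    push_neg at H
    -- proper coloring
    have hp : ∀ u v : Fin m → Fin d,
        (∃ j₀, u j₀ ≠ v j₀ ∧ ∀ j, j ≠ j₀ → u j = v j) →
        χ (SPAux.kappa m d u) ≠ χ (SPAux.kappa m d v) := by
      rintro u v ⟨j₀, hj₀, hrest⟩
      have huv : u ≠ v := fun h => hj₀ (congrFun h j₀)
      apply H u v huv
      rw [SPAux.dist_kappa]
      have hfil : (Finset.univ.filter fun j => u j ≠ v j) = {j₀} := by
        ext j
        simp only [Finset.mem_filter, Finset.mem_univ, true_and, Finset.mem_singleton]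
        constructor
        · intro hne
          by_contra hj
          exact hne (hrest j hj)
        · intro hj; rw [hj]; exact hj₀
      rw [hfil]
      norm_num
    obtain ⟨F, hF1, hF2⟩ := SPAux.exists_rainbow m d hm hd (fun w => χ (SPAux.kappa m d w)) hp
    set v : EuclideanSpace ℝ (Fin m) → (Fin m → Fin d) :=
      fun x j => if x j = 0 then (F j).1 else (F j).2 with hv
    set f : EuclideanSpace ℝ (Fin m) → EuclideanSpace ℝ (Fin m × Fin d) :=
      fun x => SPAux.kappa m d (v x) with hf
    have hs2 : Real.sqrt 2 ≠ 0 := by positivity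
    -- the filter sets agree for cube vertices
    have hfil : ∀ x ∈ cubeVertices m (Real.sqrt 2), ∀ y ∈ cubeVertices m (Real.sqrt 2),
        (Finset.univ.filter fun j => v x j ≠ v y j)
          = (Finset.univ.filter fun j => x j ≠ y j) := by
      intro x hx y hy
      ext j
      simp only [Finset.mem_filter, Finset.mem_univ, true_and, hv]
      rcases hx j with h1 | h1 <;> rcases hy j with h2 | h2 <;>
        simp [h1, h2, hs2, Ne.symm hs2, hF1 j, (hF1 j).symm]
    have hiso : ∀ x ∈ cubeVertices m (Real.sqrt 2), ∀ y ∈ cubeVertices m (Real.sqrt 2),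
        dist (f x) (f y) = dist x y := by
      intro x hx y hy
      rw [hf, SPAux.dist_kappa, SPAux.dist_cube x y hx hy, hfil x hx y hy]
    refine ⟨f, ?_, fun x _ => SPAux.kappa_mem _, hiso, ?_⟩
    · intro x hx y hy hfxy
      have := hiso x hx y hy
      rw [hfxy, dist_self] at this
      exact (dist_eq_zero.mp this.symm)
    · intro x hx y hy hcol
      -- translate to Bool vectors
      set ex : Fin m → Bool := fun j => if x j = 0 then false else true with hex
      set ey : Fin m → Bool := fun j => if y j = 0 then false else true with hey
      have hvx : v x = fun j => if ex j then (F j).2 else (F j).1 := by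
        funext j
        by_cases h : x j = 0 <;> simp [hv, hex, h]
      have hvy : v y = fun j => if ey j then (F j).2 else (F j).1 := by
        funext j
        by_cases h : y j = 0 <;> simp [hv, hey, h]
      have : ex = ey := by
        apply hF2
        rw [← hvx, ← hvy]
        exact hcol
      apply PiLp.ext; intro j
      have hj := congrFun this j
      rcases hx j with h1 | h1 <;> rcases hy j with h2 | h2 <;>
        simp [hex, hey, h1, h2, hs2] at hj ⊢ <;> rw [h1, h2]
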